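/- Let α₀ > β₀ and β₁ > α₁ be real numbers. If the function W(x) = max{(1−x)α₀ + xα₁, (1−x)β₀ + xβ₁} is monotone on [0,1] and |α₁ − α₀| ≤ |β₁ − β₀|, then β₁ ≥ α₀ and α₁ ≥ β₀. -/
import Mathlib


theorem stmt_4 (α₀ α₁ β₀ β₁ : ℝ) (h0 : α₀ > β₀) (h1 : β₁ > α₁)
    (hW : MonotoneOn (fun x : ℝ => max ((1 - x) * α₀ + x * α₁) ((1 - x) * β₀ + x * β₁))
        (Set.Icc (0:ℝ) 1) ∨
      AntitoneOn (fun x : ℝ => max ((1 - x) * α₀ + x * α₁) ((1 - x) * β₀ + x * β₁))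
        (Set.Icc (0:ℝ) 1))
    (hslope : |α₁ - α₀| ≤ |β₁ - β₀|) :
    β₁ ≥ α₀ ∧ α₁ ≥ β₀ := by
  set d := α₀ - β₀ with hd
  set e := β₁ - α₁ with he
  have hdp : 0 < d := by simp only [hd]; linarith
  have hep : 0 < e := by simp only [he]; linarith
  have hde : 0 < d + e := by linarith
  set t := d / (d + e) with htdef
  have ht0 : 0 < t := div_pos hdp hde
  have ht1 : t < 1 := by rw [htdef, div_lt_one hde]; linarith
  have htprod : t * (d + e) = d := by
    rw [htdef]; field_simp
  have hcross : (1 - t) * α₀ + t * α₁ = (1 - t) * β₀ + t * β₁ := by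
    have : t * d + t * e = d := by linarith [htprod]; 
    simp only [hd, he] at this ⊢
    nlinarith [this]
  have hmem0 : (0:ℝ) ∈ Set.Icc (0:ℝ) 1 := by constructor <;> norm_num
  have hmem1 : (1:ℝ) ∈ Set.Icc (0:ℝ) 1 := by constructor <;> norm_num
  have hmemt : t ∈ Set.Icc (0:ℝ) 1 := ⟨le_of_lt ht0, le_of_lt ht1⟩
  have hf0 : max ((1 - (0:ℝ)) * α₀ + 0 * α₁) ((1 - (0:ℝ)) * β₀ + 0 * β₁) = α₀ := by
    rw [max_eq_left] <;> norm_num; linarith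
  have hf1 : max ((1 - (1:ℝ)) * α₀ + 1 * α₁) ((1 - (1:ℝ)) * β₀ + 1 * β₁) = β₁ := by
    rw [max_eq_right] <;> norm_num; linarith
  have hft : max ((1 - t) * α₀ + t * α₁) ((1 - t) * β₀ + t * β₁) = (1 - t) * α₀ + t * α₁ := by
    rw [hcross, max_self]
  rcases hW with hmono | hanti
  · have hA : α₀ ≤ β₁ := by
      have h := hmono hmem0 hmem1 (by norm_num)
      simp only [hf0, hf1] at h
      exact h
    have hB : α₀ ≤ α₁ := by
      have h := hmono hmem0 hmemt (le_of_lt ht0)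
      simp only [hf0, hft] at h
      by_contra hc
      push_neg at hc
      nlinarith [mul_pos ht0 (show (0:ℝ) < α₀ - α₁ by linarith)]
    exact ⟨hA, by linarith⟩
  · exfalso
    have hB : α₁ ≤ α₀ := by
      have h := hanti hmem0 hmemt (le_of_lt ht0)
      simp only [hf0, hft] at h
      by_contra hc
      push_neg at hc
      nlinarith [mul_pos ht0 (show (0:ℝ) < α₁ - α₀ by linarith)]
    have hC : β₁ ≤ β₀ := by
      have h := hanti hmemt hmem1 (le_of_lt ht1)
      simp only [hf1, hft, hcross, max_self] at h
      by_contra hc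
      push_neg at hc
      nlinarith [mul_pos (show (0:ℝ) < 1 - t by linarith) (show (0:ℝ) < β₁ - β₀ by linarith)]
    rw [abs_of_nonpos (by linarith), abs_of_nonpos (by linarith)] at hslope
    linarith
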